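/- Let L be symmetric PSD with L = SᵀS, let P ∈ ℝ^{n×N}, Π = P^+P, and L_c = (P^+)ᵀLP^+. If x ∈ ℝ^N satisfies ‖x − Πx‖_L ≤ ε‖x‖_L (where ‖y‖_L = √(yᵀLy)), then (1−ε)‖x‖_L ≤ ‖Px‖_{L_c} ≤ (1+ε)‖x‖_L, where ‖x_c‖_{L_c} = √(x_cᵀ L_c x_c). -/
import Mathlib


open Matrix Finset

/-- The four Penrose conditions characterizing the Moore–Penrose pseudoinverse. -/
def IsMoorePenrose {m n : ℕ} (P : Matrix (Fin m) (Fin n) ℝ)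
    (Pp : Matrix (Fin n) (Fin m) ℝ) : Prop :=
  P * Pp * P = P ∧ Pp * P * Pp = Pp ∧ (P * Pp)ᵀ = P * Pp ∧ (Pp * P)ᵀ = Pp * P

/-- The semi-norm `‖x‖_L = √(xᵀ L x)` induced by a PSD matrix `L`. -/
noncomputable def lnorm {N : ℕ} (L : Matrix (Fin N) (Fin N) ℝ) (x : Fin N → ℝ) : ℝ :=
  Real.sqrt (x ⬝ᵥ (L *ᵥ x))

lemma sqrt_dot_eq_norm {M : ℕ} (v : Fin M → ℝ) :
    Real.sqrt (v ⬝ᵥ v) = ‖(WithLp.equiv 2 (Fin M → ℝ)).symm v‖ := by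
  rw [EuclideanSpace.norm_eq]
  congr 1
  simp [dotProduct, Real.norm_eq_abs, sq_abs, sq]

lemma lnorm_eq {N M : ℕ} (S : Matrix (Fin M) (Fin N) ℝ) (y : Fin N → ℝ) :
    lnorm (Sᵀ * S) y = ‖(WithLp.equiv 2 (Fin M → ℝ)).symm (S *ᵥ y)‖ := by
  rw [lnorm, ← sqrt_dot_eq_norm]
  congr 1
  rw [← mulVec_mulVec, dotProduct_mulVec, vecMul_transpose]

/-- Restricted spectral approximation implies restricted isometry:
if `‖x − Πx‖_L ≤ ε ‖x‖_L` then `(1−ε)‖x‖_L ≤ ‖Px‖_{L_c} ≤ (1+ε)‖x‖_L`. -/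
theorem restricted_isometry {n N M : ℕ}
    (L : Matrix (Fin N) (Fin N) ℝ) (S : Matrix (Fin M) (Fin N) ℝ) (hLS : L = Sᵀ * S)
    (P : Matrix (Fin n) (Fin N) ℝ) (Pp : Matrix (Fin N) (Fin n) ℝ)
    (hMP : IsMoorePenrose P Pp)
    (ε : ℝ) (hε : 0 ≤ ε) (x : Fin N → ℝ)
    (hx : lnorm L (x - (Pp * P) *ᵥ x) ≤ ε * lnorm L x) :
    (1 - ε) * lnorm L x ≤ lnorm (Ppᵀ * L * Pp) (P *ᵥ x) ∧
      lnorm (Ppᵀ * L * Pp) (P *ᵥ x) ≤ (1 + ε) * lnorm L x := by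
  subst hLS
  have hLc : Ppᵀ * (Sᵀ * S) * Pp = (S * Pp)ᵀ * (S * Pp) := by
    rw [transpose_mul]; simp [Matrix.mul_assoc]
  have key : lnorm (Ppᵀ * (Sᵀ * S) * Pp) (P *ᵥ x)
      = lnorm (Sᵀ * S) ((Pp * P) *ᵥ x) := by
    rw [hLc, lnorm_eq (S * Pp), lnorm_eq S]
    congr 2
    rw [← mulVec_mulVec, ← mulVec_mulVec]
  rw [key, lnorm_eq S, lnorm_eq S ((Pp * P) *ᵥ x)]
  simp only [lnorm_eq S] at hx
  set u : EuclideanSpace ℝ (Fin M) := (WithLp.equiv 2 (Fin M → ℝ)).symm (S *ᵥ x) with hu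
  set w : EuclideanSpace ℝ (Fin M) := (WithLp.equiv 2 (Fin M → ℝ)).symm (S *ᵥ ((Pp * P) *ᵥ x)) with hw
  have hdiff : (WithLp.equiv 2 (Fin M → ℝ)).symm (S *ᵥ (x - (Pp * P) *ᵥ x)) = u - w := by
    rw [mulVec_sub]; rfl
  rw [hdiff] at hx
  constructor
  · have h1 : ‖u‖ ≤ ‖w‖ + ‖u - w‖ := norm_le_insert' u w
    nlinarith [hx, norm_nonneg u]
  · have h2 : ‖w‖ ≤ ‖u‖ + ‖u - w‖ := by
      have := norm_sub_norm_le w u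
      have h3 : ‖w - u‖ = ‖u - w‖ := norm_sub_rev w u
      linarith
    nlinarith
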